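/- arXiv:1209.5486 — 5 statements merged into one kernel-verified Lean document; each statement's English description precedes it below -/
import Mathlib

section
/- If a topological space X is the disjoint union X = A₁ ⊔ A₂ of two nonempty open sets, with e₁ ∈ A₁ and e₂ ∈ A₂, then the free Graev topological group F_G(X,e₁) is isomorphic as a topological group to the free Markov topological group F_M(A₁ ∨ A₂), where A₁ ∨ A₂ = X/{e₁,e₂} is the wedge obtained by identifying e₁ and e₂. -/
universe u

/-- `σ : X → F` exhibits the topological group `F` as the free Markov topological group
on the space `X`. -/
structure IsFreeMarkov (X : Type u) [TopologicalSpace X]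
    (F : Type u) [Group F] [TopologicalSpace F] [IsTopologicalGroup F]
    (σ : C(X, F)) : Prop where
  lift : ∀ (G : Type u) [Group G] [TopologicalSpace G] [IsTopologicalGroup G]
    (f : C(X, G)), ∃! φ : F →* G, Continuous φ ∧ ∀ x, φ (σ x) = f x

/-- `σ : X → F` exhibits the topological group `F` as the free Graev topological group
on the pointed space `(X, x₀)`. -/
structure IsFreeGraev (X : Type u) [TopologicalSpace X] (x₀ : X)
    (F : Type u) [Group F] [TopologicalSpace F] [IsTopologicalGroup F]
    (σ : C(X, F)) : Prop where
  map_base : σ x₀ = 1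
  lift : ∀ (G : Type u) [Group G] [TopologicalSpace G] [IsTopologicalGroup G]
    (f : C(X, G)), f x₀ = 1 →
      ∃! φ : F →* G, Continuous φ ∧ ∀ x, φ (σ x) = f x

/-- The setoid on `X` identifying the two points `e₁` and `e₂`. -/
def wedgeSetoid {X : Type u} (e₁ e₂ : X) : Setoid X where
  r a b := a = b ∨ ((a = e₁ ∨ a = e₂) ∧ (b = e₁ ∨ b = e₂))
  iseqv := by
    constructor
    · exact fun a => Or.inl rfl
    · rintro a b (rfl | h)
      · exact Or.inl rfl
      · exact Or.inr ⟨h.2, h.1⟩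
    · rintro a b c (rfl | h) (rfl | h')
      · exact Or.inl rfl
      · exact Or.inr h'
      · exact Or.inr h
      · exact Or.inr ⟨h.1, h'.2⟩

/-- If `X = A₁ ⊔ A₂` is the disjoint union of two nonempty open sets with `e₁ ∈ A₁`
and `e₂ ∈ A₂`, then the free Graev topological group `F_G(X, e₁)` is isomorphic as a
topological group to the free Markov topological group on the wedge `A₁ ∨ A₂`,
the quotient of `X` identifying `e₁` and `e₂`. -/
theorem freeGraev_iso_freeMarkov_wedge {X F F' : Type u} [TopologicalSpace X]
    (A₁ A₂ : Set X) (hA₁ : IsOpen A₁) (hA₂ : IsOpen A₂)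
    (hne₁ : A₁.Nonempty) (hne₂ : A₂.Nonempty)
    (hdisj : Disjoint A₁ A₂) (hunion : A₁ ∪ A₂ = Set.univ)
    (e₁ e₂ : X) (he₁ : e₁ ∈ A₁) (he₂ : e₂ ∈ A₂)
    [Group F] [TopologicalSpace F] [IsTopologicalGroup F]
    [Group F'] [TopologicalSpace F'] [IsTopologicalGroup F']
    (σG : C(X, F)) (hG : IsFreeGraev X e₁ F σG)
    (σM : C(Quotient (wedgeSetoid e₁ e₂), F'))
    (hM : IsFreeMarkov (Quotient (wedgeSetoid e₁ e₂)) F' σM) :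
    ∃ φ : F ≃* F', Continuous φ ∧ Continuous φ.symm := by
  classical
  -- basic set facts
  have hA1c : A₁ᶜ = A₂ := by
    ext x
    constructor
    · intro hx
      have : x ∈ A₁ ∪ A₂ := hunion ▸ Set.mem_univ x
      rcases this with h | h
      · exact absurd h hx
      · exact h
    · intro hx
      exact Set.disjoint_right.mp hdisj hx
  have he₂' : e₂ ∉ A₁ := Set.disjoint_right.mp hdisj he₂
  have hclopen : IsClopen A₁ := ⟨by rw [← isOpen_compl_iff, hA1c]; exact hA₂, hA₁⟩
  have hfr : frontier A₁ = ∅ := hclopen.frontier_eq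
  set q : X → Quotient (wedgeSetoid e₁ e₂) := Quotient.mk (wedgeSetoid e₁ e₂) with hq
  have hqc : Continuous q := continuous_quot_mk
  have hqe : q e₁ = q e₂ := Quotient.sound (Or.inr ⟨Or.inl rfl, Or.inr rfl⟩)
  -- h : X → F'
  set c : F' := σM (q e₂) with hc
  have hcont_h : Continuous fun x => if x ∈ A₁ then σM (q x) * c⁻¹ else σM (q x) := by
    apply Continuous.if
    · intro a ha
      rw [Set.setOf_mem_eq, hfr] at ha
      exact absurd ha (Set.notMem_empty a)
    · exact (σM.continuous.comp hqc).mul continuous_const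
    · exact σM.continuous.comp hqc
  have hh1 : (if e₁ ∈ A₁ then σM (q e₁) * c⁻¹ else σM (q e₁)) = 1 := by
    rw [if_pos he₁, hqe, mul_inv_cancel]
  obtain ⟨φ, ⟨hφc, hφ⟩, hφu⟩ := hG.lift F' ⟨_, hcont_h⟩ hh1
  -- g : W → F
  have gwd : ∀ a b, (wedgeSetoid e₁ e₂).r a b →
      (if a ∈ A₁ then σG a * σG e₂ else σG a) = (if b ∈ A₁ then σG b * σG e₂ else σG b) := by
    have key : ∀ a, (a = e₁ ∨ a = e₂) → (if a ∈ A₁ then σG a * σG e₂ else σG a) = σG e₂ := by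
      rintro a (rfl | rfl)
      · rw [if_pos he₁, hG.map_base, one_mul]
      · rw [if_neg he₂']
    rintro a b (rfl | ⟨ha, hb⟩)
    · rfl
    · rw [key a ha, key b hb]
  have hcont_g0 : Continuous fun x => if x ∈ A₁ then σG x * σG e₂ else σG x := by
    apply Continuous.if
    · intro a ha
      rw [Set.setOf_mem_eq, hfr] at ha
      exact absurd ha (Set.notMem_empty a)
    · exact σG.continuous.mul continuous_const
    · exact σG.continuous
  obtain ⟨ψ, ⟨hψc, hψ⟩, hψu⟩ := hM.lift F
    ⟨Quotient.lift _ gwd, continuous_quot_lift gwd hcont_g0⟩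
  have hψq : ∀ x : X, ψ (σM (q x)) = if x ∈ A₁ then σG x * σG e₂ else σG x := fun x => hψ (q x)
  -- ψ ∘ φ = id
  obtain ⟨θ, _, hθu⟩ := hG.lift F σG hG.map_base
  have hψφ : ψ.comp φ = MonoidHom.id F := by
    have h1 : ψ.comp φ = θ := by
      apply hθu
      refine ⟨hψc.comp hφc, fun x => ?_⟩
      simp only [MonoidHom.comp_apply, hφ x, ContinuousMap.coe_mk]
      by_cases hx : x ∈ A₁
      · rw [if_pos hx, map_mul, map_inv, hψq x, if_pos hx, hc, hψq e₂, if_neg he₂']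
        group
      · rw [if_neg hx, hψq x, if_neg hx]
    have h2 : MonoidHom.id F = θ := by
      apply hθu
      exact ⟨continuous_id, fun x => rfl⟩
    rw [h1, h2]
  -- φ ∘ ψ = id
  obtain ⟨θ', _, hθ'u⟩ := hM.lift F' σM
  have hφψ : φ.comp ψ = MonoidHom.id F' := by
    have h1 : φ.comp ψ = θ' := by
      apply hθ'u
      refine ⟨hφc.comp hψc, fun w => ?_⟩
      obtain ⟨x, rfl⟩ := Quotient.exists_rep w
      show φ (ψ (σM (q x))) = σM (q x)
      rw [hψq x]
      by_cases hx : x ∈ A₁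
      · rw [if_pos hx, map_mul, hφ x, hφ e₂]
        simp only [ContinuousMap.coe_mk]
        rw [if_pos hx, if_neg he₂', hc]
        group
      · rw [if_neg hx, hφ x]
        simp only [ContinuousMap.coe_mk]
        rw [if_neg hx]
    have h2 : MonoidHom.id F' = θ' := by
      apply hθ'u
      exact ⟨continuous_id, fun x => rfl⟩
    rw [h1, h2]
  exact ⟨{ toFun := φ, invFun := ψ,
           left_inv := fun a => DFunLike.congr_fun hψφ a,
           right_inv := fun a => DFunLike.congr_fun hφψ a,
           map_mul' := map_mul φ }, hφc, hψc⟩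
end

section
/- For a pointed topological space (X,*), the free Graev topological group F_G(X,*) is isomorphic as a topological group to the quotient topological group F_M(X)/N, where N is the normal closure of the element σ(*) in F_M(X). -/
universe u

/-- The free Graev topological group `F_G(X, x₀)` is isomorphic as a topological group
to the quotient topological group `F_M(X) / N`, where `N` is the normal closure of
`σ x₀` in the free Markov topological group `F_M(X)`. -/
theorem freeGraev_iso_quotient_freeMarkov {X F F' : Type u} [TopologicalSpace X]
    (x₀ : X)
    [Group F] [TopologicalSpace F] [IsTopologicalGroup F]
    [Group F'] [TopologicalSpace F'] [IsTopologicalGroup F']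
    (σM : C(X, F)) (hM : IsFreeMarkov X F σM)
    (σG : C(X, F')) (hG : IsFreeGraev X x₀ F' σG) :
    ∃ φ : F' ≃* F ⧸ Subgroup.normalClosure {σM x₀},
      Continuous φ ∧ Continuous φ.symm := by
  classical
  set N := Subgroup.normalClosure {σM x₀} with hN
  let π : F →* F ⧸ N := QuotientGroup.mk' N
  have hπc : Continuous π := continuous_quot_mk
  have hπs : Function.Surjective π := QuotientGroup.mk'_surjective N
  -- q : C(X, F ⧸ N)
  let q : C(X, F ⧸ N) := ⟨fun x => π (σM x), hπc.comp σM.continuous⟩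
  have hq0 : q x₀ = 1 := by
    show π (σM x₀) = 1
    rw [← MonoidHom.mem_ker, QuotientGroup.ker_mk']
    exact Subgroup.subset_normalClosure rfl
  obtain ⟨φ, ⟨hφc, hφ⟩, hφu⟩ := hG.lift (F ⧸ N) q hq0
  obtain ⟨ψ0, ⟨hψ0c, hψ0⟩, hψ0u⟩ := hM.lift F' σG
  have hker : N ≤ ψ0.ker := by
    apply Subgroup.normalClosure_le_normal
    intro y hy
    rcases hy with rfl
    simp [MonoidHom.mem_ker, hψ0 x₀, hG.map_base]
  let ψ : F ⧸ N →* F' := QuotientGroup.lift N ψ0 hker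
  have hψc : Continuous ψ :=
    (QuotientGroup.isQuotientMap_mk N).continuous_iff.mpr hψ0c
  have hψ : ∀ x, ψ (π (σM x)) = σG x := fun x => hψ0 x
  -- ψ ∘ φ = id on F'
  have hleft : ψ.comp φ = MonoidHom.id F' := by
    obtain ⟨χ, _, hχu⟩ := hG.lift F' σG hG.map_base
    have h1 : ψ.comp φ = χ := hχu _ ⟨hψc.comp hφc, fun x => by
      simp only [MonoidHom.comp_apply, hφ x]; exact hψ x⟩
    have h2 : MonoidHom.id F' = χ := hχu _ ⟨continuous_id, fun x => rfl⟩
    rw [h1, h2]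
  -- φ ∘ ψ = id on F ⧸ N
  have hright : (φ.comp ψ).comp π = π := by
    obtain ⟨χ, _, hχu⟩ := hM.lift (F ⧸ N) q
    have h1 : (φ.comp ψ).comp π = χ := hχu _ ⟨(hφc.comp hψc).comp hπc, fun x => by
      simp only [MonoidHom.comp_apply]
      rw [show ψ (π (σM x)) = σG x from hψ x, hφ x]⟩
    have h2 : π = χ := hχu _ ⟨hπc, fun x => rfl⟩
    rw [h1, h2]
  refine ⟨{ toFun := φ, invFun := ψ,
            left_inv := fun a => by
              have := congrArg (fun f : F' →* F' => f a) hleft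
              simpa using this,
            right_inv := fun b => by
              obtain ⟨a, rfl⟩ := hπs b
              have := congrArg (fun f : F →* F ⧸ N => f a) hright
              simpa using this,
            map_mul' := φ.map_mul }, hφc, hψc⟩
end

section
/- A topological space X is connected if and only if the free Graev topological group F_G(X,*) is connected. -/
universe u

/-- A (nonempty) space `X` is connected if and only if the free Graev topological
group `F_G(X, x₀)` is connected. -/
theorem connected_iff_freeGraev_connected {X F : Type u} [TopologicalSpace X]
    (x₀ : X) [Group F] [TopologicalSpace F] [IsTopologicalGroup F]
    (σ : C(X, F)) (h : IsFreeGraev X x₀ F σ) :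
    ConnectedSpace X ↔ ConnectedSpace F := by
  constructor
  · intro hX
    -- the subgroup generated by the range of σ is all of F
    set H : Subgroup F := Subgroup.closure (Set.range σ) with hH
    have hmem : ∀ x, σ x ∈ H := fun x => Subgroup.subset_closure (Set.mem_range_self x)
    let f : C(X, H) := ⟨fun x => ⟨σ x, hmem x⟩, σ.continuous.subtype_mk _⟩
    have hf0 : f x₀ = 1 := Subtype.ext (show σ x₀ = 1 from h.map_base)
    obtain ⟨ψ, ⟨hψc, hψ⟩, _⟩ := h.lift H f hf0
    have hid : H.subtype.comp ψ = MonoidHom.id F := by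
      obtain ⟨φ₀, hφ₀, huniq⟩ := h.lift F σ h.map_base
      have h1 : H.subtype.comp ψ = φ₀ := huniq _
        ⟨continuous_subtype_val.comp hψc, fun x => by rw [MonoidHom.comp_apply, hψ x]; rfl⟩
      have h2 : MonoidHom.id F = φ₀ := huniq _ ⟨continuous_id, fun x => rfl⟩
      rw [h1, h2]
    have htop : ∀ a : F, a ∈ H := by
      intro a
      have : H.subtype (ψ a) = a := by
        have := congrArg (fun m => m a) hid
        simpa using this
      rw [← this]; exact (ψ a).2
    -- the range of σ is connected and contains 1, so H ≤ connectedComponent 1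
    have hconn : Set.range σ ⊆ connectedComponent (1 : F) := by
      have hr : IsPreconnected (Set.range σ) := isPreconnected_range σ.continuous
      have h1 : (1 : F) ∈ Set.range σ := ⟨x₀, h.map_base⟩
      exact hr.subset_connectedComponent h1
    have hle : H ≤ Subgroup.connectedComponentOfOne F :=
      (Subgroup.closure_le _).mpr hconn
    have huniv : connectedComponent (1 : F) = Set.univ := by
      apply Set.eq_univ_of_forall
      intro a
      exact hle (htop a)
    haveI : PreconnectedSpace F := by
      refine ⟨?_⟩
      rw [← huniv]
      exact isPreconnected_connectedComponent
    exact ⟨⟨1⟩⟩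
  · intro hF
    haveI : PreconnectedSpace X := by
      apply preconnectedSpace_of_forall_constant
      intro f hf x y
      by_contra hxy
      -- build a map into the discrete group Multiplicative (ULift ℤ)
      letI M := Multiplicative (ULift.{u} ℤ)
      letI : TopologicalSpace M := ⊥
      haveI : DiscreteTopology M := ⟨rfl⟩
      haveI : IsTopologicalGroup M := ⟨⟩
      let c : M := Multiplicative.ofAdd (ULift.up 1)
      let g : X → M := fun z => if f z = f x₀ then 1 else c
      have hg : Continuous g := by
        have : g = (fun b : Bool => if b = f x₀ then (1 : M) else c) ∘ f := rfl
        rw [this]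
        exact (continuous_of_discreteTopology).comp hf
      obtain ⟨φ, ⟨hφc, hφ⟩, _⟩ := h.lift M ⟨g, hg⟩ (by simp [g])
      -- φ is constant since F is connected and M is discrete
      have hconst : ∀ a : F, φ a = 1 := by
        intro a
        have hrange : IsPreconnected (Set.range φ) := isPreconnected_range hφc
        have hsub : (Set.range φ).Subsingleton := hrange.subsingleton
        exact hsub ⟨a, rfl⟩ ⟨1, map_one φ⟩
      have hc1 : c ≠ (1 : M) := by
        intro hc
        have : (ULift.up 1 : ULift.{u} ℤ) = ULift.up 0 := hc
        simpa using congrArg ULift.down this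
      have hx' : g x = 1 := by
        have hh := hφ x; simp only [ContinuousMap.coe_mk] at hh; rw [← hh]; exact hconst _
      have hy' : g y = 1 := by
        have hh := hφ y; simp only [ContinuousMap.coe_mk] at hh; rw [← hh]; exact hconst _
      have hx1 : f x = f x₀ := by
        by_contra hne; simp only [g, if_neg hne] at hx'; exact hc1 hx'
      have hy1 : f y = f x₀ := by
        by_contra hne; simp only [g, if_neg hne] at hy'; exact hc1 hy'
      exact hxy (hx1.trans hy1.symm)
    exact ⟨⟨x₀⟩⟩
end

section
/- If F_G(X,*) is connected (equivalently, X is connected and nonempty), then F_G(X,*) is not isomorphic as a topological group to any free Markov topological group F_M(Y) on a nonempty space Y. -/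
universe u

/-- If the free Graev topological group `F_G(X, x₀)` is connected, then it is not
isomorphic as a topological group to any free Markov topological group on a
nonempty space. -/
theorem connected_freeGraev_not_freeMarkov {X F : Type u} [TopologicalSpace X]
    (x₀ : X) [Group F] [TopologicalSpace F] [IsTopologicalGroup F]
    (σ : C(X, F)) (h : IsFreeGraev X x₀ F σ) (hc : ConnectedSpace F) :
    ∀ (Y F' : Type u) [TopologicalSpace Y] [Nonempty Y]
      [Group F'] [TopologicalSpace F'] [IsTopologicalGroup F']
      (σ' : C(Y, F')), IsFreeMarkov Y F' σ' →
        ¬ ∃ φ : F ≃* F', Continuous φ ∧ Continuous φ.symm := by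
  intro Y F' _ _ _ _ _ σ' hM ⟨φ, hφc, hφsc⟩
  -- target discrete group
  letI : TopologicalSpace (ULift.{u} (Multiplicative (ZMod 2))) := ⊥
  haveI : DiscreteTopology (ULift.{u} (Multiplicative (ZMod 2))) := ⟨rfl⟩
  haveI : IsTopologicalGroup (ULift.{u} (Multiplicative (ZMod 2))) :=
    { continuous_mul := continuous_of_discreteTopology
      continuous_inv := continuous_of_discreteTopology }
  set a : ULift.{u} (Multiplicative (ZMod 2)) := ULift.up (Multiplicative.ofAdd 1)
  obtain ⟨ψ, ⟨hψc, hψ⟩, -⟩ := hM.lift _ ⟨fun _ => a, continuous_const⟩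
  obtain ⟨y⟩ := ‹Nonempty Y›
  have hconst : ∀ u v : F, ψ (φ u) = ψ (φ v) :=
    fun u v => PreconnectedSpace.constant hc.toPreconnectedSpace (hψc.comp hφc) (x := u) (y := v)
  have h1 : ψ (φ 1) = a := by
    have := hconst 1 (φ.symm (σ' y))
    rw [this, MulEquiv.apply_symm_apply, hψ y]; rfl
  rw [map_one, map_one] at h1
  have : (1 : ZMod 2) = 0 := congrArg (fun z => Multiplicative.toAdd z.down) h1.symm
  exact one_ne_zero this
end

section
/- The free Markov topological group functor F_M: Top → TopGrp is left adjoint to the forgetful functor from topological groups to topological spaces. -/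
universe u

open CategoryTheory

/-- The category of topological groups and continuous homomorphisms. -/
structure TopGrpCat : Type (u + 1) where
  carrier : Type u
  [group : Group carrier]
  [topology : TopologicalSpace carrier]
  [topGroup : IsTopologicalGroup carrier]

attribute [instance] TopGrpCat.group TopGrpCat.topology TopGrpCat.topGroup

instance : Category TopGrpCat.{u} where
  Hom A B := ContinuousMonoidHom A.carrier B.carrier
  id A := ContinuousMonoidHom.id A.carrier
  comp f g := g.comp f
  id_comp f := rfl
  comp_id f := rfl
  assoc f g h := rfl

/-- The forgetful functor from topological groups to topological spaces. -/
def topGrpForget : TopGrpCat.{u} ⥤ TopCat.{u} where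
  obj A := TopCat.of A.carrier
  map f := TopCat.ofHom f.toContinuousMap
  map_id A := by rfl
  map_comp f g := by rfl

open Topology

section Markov

variable (X : Type u) [TopologicalSpace X]

/-- The Markov (finest) group topology on the free group making `of` continuous. -/
def markovTopology : TopologicalSpace (FreeGroup X) :=
  (GroupTopology.coinduced FreeGroup.of).toTopologicalSpace

theorem markov_topologicalGroup :
    @IsTopologicalGroup (FreeGroup X) (markovTopology X) _ :=
  (GroupTopology.coinduced FreeGroup.of).toIsTopologicalGroup

theorem markov_continuous_of :
    Continuous[_, markovTopology X] (FreeGroup.of : X → FreeGroup X) :=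
  GroupTopology.coinduced_continuous _

theorem markov_continuous_lift {G : Type u} [Group G] [ts : TopologicalSpace G]
    [IsTopologicalGroup G] (φ : FreeGroup X →* G)
    (h : Continuous fun x => φ (FreeGroup.of x)) :
    Continuous[markovTopology X, ts] φ := by
  let τ' : GroupTopology (FreeGroup X) :=
    { toTopologicalSpace := TopologicalSpace.induced φ ts
      toIsTopologicalGroup := topologicalGroup_induced φ }
  have hmem : TopologicalSpace.coinduced FreeGroup.of ‹TopologicalSpace X› ≤
      τ'.toTopologicalSpace := by
    rw [← continuous_iff_coinduced_le]
    exact continuous_induced_rng.2 h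
  have hle : GroupTopology.coinduced (FreeGroup.of : X → FreeGroup X) ≤ τ' :=
    sInf_le hmem
  exact continuous_iff_le_induced.2 (GroupTopology.toTopologicalSpace_le.2 hle)

end Markov

/-- The free Markov topological group on a topological space, as an object of `TopGrpCat`. -/
def FMobj (X : TopCat.{u}) : TopGrpCat.{u} :=
  letI : TopologicalSpace (FreeGroup X) := markovTopology X
  haveI : IsTopologicalGroup (FreeGroup X) := markov_topologicalGroup X
  ⟨FreeGroup X⟩

/-- The canonical continuous monoid hom out of the free Markov group, lifting a continuous map. -/
def FMlift {X : TopCat.{u}} {G : TopGrpCat.{u}} (f : C(X, G.carrier)) :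
    ContinuousMonoidHom (FMobj X).carrier G.carrier :=
  { toMonoidHom := FreeGroup.lift f
    continuous_toFun := markov_continuous_lift (X : Type u) (FreeGroup.lift f) <| by
      simpa [FreeGroup.lift_apply_of] using f.continuous }

/-- Extensionality for continuous monoid homs out of a free Markov group. -/
theorem FMhom_ext {X : TopCat.{u}} {G : TopGrpCat.{u}}
    (φ ψ : ContinuousMonoidHom (FMobj X).carrier G.carrier)
    (h : ∀ x, φ (FreeGroup.of x) = ψ (FreeGroup.of x)) : φ = ψ :=
  DFunLike.ext _ _ fun a =>
    DFunLike.congr_fun (FreeGroup.ext_hom φ.toMonoidHom ψ.toMonoidHom h) a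

/-- The free Markov topological group functor. -/
def FMfunctor : TopCat.{u} ⥤ TopGrpCat.{u} where
  obj := FMobj
  map {X Y} f :=
    letI : TopologicalSpace (FreeGroup (Y : Type u)) := markovTopology (Y : Type u)
    FMlift (G := FMobj Y) ⟨fun x => FreeGroup.of (f x),
      (markov_continuous_of (Y : Type u)).comp f.hom.continuous⟩
  map_id X := FMhom_ext _ _ fun x => by simp [FMlift, FreeGroup.lift_apply_of]; rfl
  map_comp {X Y Z} f g := FMhom_ext _ _ fun x => by
    exact FreeGroup.lift_apply_of.trans (FreeGroup.lift_apply_of.symm.trans (congrArg _ FreeGroup.lift_apply_of.symm))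

/-- The hom-set equivalence underlying the free–forgetful adjunction. -/
def FMhomEquiv (X : TopCat.{u}) (G : TopGrpCat.{u}) :
    ContinuousMonoidHom (FMobj X).carrier G.carrier ≃ C((X : Type u), G.carrier) where
  toFun φ := ⟨fun x => φ (FreeGroup.of x),
    φ.continuous_toFun.comp (markov_continuous_of (X : Type u))⟩
  invFun f := FMlift f
  left_inv φ := FMhom_ext _ _ fun x => FreeGroup.lift_apply_of
  right_inv f := ContinuousMap.ext fun x => FreeGroup.lift_apply_of

/-- The free Markov topological group functor `Top ⥤ TopGrp` is left adjoint to the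
forgetful functor from topological groups to topological spaces: there is a functor
`F` together with an adjunction `F ⊣ forget` whose unit exhibits each `F.obj X` as
the free Markov topological group on `X`. -/
theorem freeMarkov_left_adjoint_forget :
    ∃ (F : TopCat.{u} ⥤ TopGrpCat.{u}) (adj : F ⊣ topGrpForget.{u}),
      ∀ X : TopCat.{u},
        IsFreeMarkov X (F.obj X).carrier
          (⟨fun x => adj.unit.app X x, (adj.unit.app X).hom.continuous⟩ : C(X, (F.obj X).carrier)) := by
  refine ⟨FMfunctor, Adjunction.mkOfHomEquiv
    { homEquiv := fun X G => (FMhomEquiv X G).trans ⟨TopCat.ofHom, TopCat.Hom.hom, fun _ => rfl, fun _ => rfl⟩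
      homEquiv_naturality_left_symm := by
        intro X' X G f g
        refine FMhom_ext _ _ fun x => ?_
        exact FreeGroup.lift_apply_of.trans (FreeGroup.lift_apply_of.symm.trans (congrArg _ FreeGroup.lift_apply_of.symm))
      homEquiv_naturality_right := by
        intro X G G' φ g
        exact TopCat.ext fun x => rfl }, fun X => ?_⟩
  constructor
  intro G _ _ _ f
  refine ⟨FreeGroup.lift f, ⟨?_, fun x => FreeGroup.lift_apply_of⟩, ?_⟩
  · exact markov_continuous_lift (X : Type u) (FreeGroup.lift f)
      (by simpa [FreeGroup.lift_apply_of] using f.continuous)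
  · intro ψ hψ
    refine FreeGroup.ext_hom ψ (FreeGroup.lift f) fun x => ?_
    have := hψ.2 x
    exact this.trans FreeGroup.lift_apply_of.symm
end
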